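/- For each fixed p > 0 and each x ∈ (0,1), with φ(p,t) = (1-t^p)^{-1/p} and η(p,x) = (1/p²)log(1-x^p) + x^p log x / (p(1-x^p)), the function G(x) = x·η(p,x)²/φ(p,x)^{p-1} - ∫₀ˣ φ''_{pp}(p,t) dt is strictly negative, where φ''_{pp} denotes the second partial derivative of φ in p. -/

import Mathlib

open Real Set

noncomputable def etaF (p t : ℝ) : ℝ :=
  (1 / p ^ 2) * Real.log (1 - t ^ p) + t ^ p * Real.log t / (p * (1 - t ^ p))

/-- `A(t) = t η² / φ^{p-1}` -/
noncomputable def AF (p t : ℝ) : ℝ :=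
  t * etaF p t ^ 2 / ((1 - t ^ p) ^ (-(1 / p))) ^ (p - 1)

/-- closed form of `∂²φ/∂p²` -/
noncomputable def EF (p t : ℝ) : ℝ :=
  (1 - t ^ p) ^ (-(1 / p)) *
    (etaF p t ^ 2 - 2 * etaF p t / p + t ^ p * Real.log t ^ 2 / (p * (1 - t ^ p) ^ 2))

/-- closed form of `A'(t)` -/
noncomputable def DF (p t : ℝ) : ℝ :=
  (1 - t ^ p) ^ ((p - 1) / p) *
    (etaF p t ^ 2 + 2 * etaF p t * (t ^ p * Real.log t) / (1 - t ^ p) ^ 2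
      + (1 - p) * t ^ p * etaF p t ^ 2 / (1 - t ^ p))

lemma w_pos {p t : ℝ} (hp : 0 < p) (ht : t ∈ Set.Ioo (0:ℝ) 1) : 0 < t ^ p :=
  Real.rpow_pos_of_pos ht.1 p

lemma w_lt_one {p t : ℝ} (hp : 0 < p) (ht : t ∈ Set.Ioo (0:ℝ) 1) : t ^ p < 1 :=
  Real.rpow_lt_one ht.1.le ht.2 hp

lemma one_sub_w_pos {p t : ℝ} (hp : 0 < p) (ht : t ∈ Set.Ioo (0:ℝ) 1) : 0 < 1 - t ^ p :=
  by linarith [w_lt_one hp ht]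

/-- inner derivative: `∂φ/∂q = φ η` -/
lemma hasDerivAt_phi {t : ℝ} (ht : t ∈ Set.Ioo (0:ℝ) 1) {q : ℝ} (hq : 0 < q) :
    HasDerivAt (fun r => (1 - t ^ r) ^ (-(1 / r)))
      ((1 - t ^ q) ^ (-(1 / q)) * etaF q t) q := by
  have htq : t ∈ Set.Ioo (0:ℝ) 1 := ht
  have hw : 0 < 1 - t ^ q := one_sub_w_pos hq ht
  have hwne : (1 : ℝ) - t ^ q ≠ 0 := ne_of_gt hw
  have h0 : HasDerivAt (fun r => t ^ r) (t ^ q * Real.log t) q :=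
    (Real.hasStrictDerivAt_const_rpow ht.1 q).hasDerivAt
  have h1 : HasDerivAt (fun r => 1 - t ^ r) (-(t ^ q * Real.log t)) q := by
    exact h0.const_sub 1
  have h2 : HasDerivAt (fun r => Real.log (1 - t ^ r))
      (-(t ^ q * Real.log t) / (1 - t ^ q)) q := h1.log hwne
  have h3 : HasDerivAt (fun r : ℝ => -(1 / r)) ((q ^ 2)⁻¹) q := by
    simpa [one_div, Pi.neg_def] using (hasDerivAt_inv hq.ne').neg
  have h4 : HasDerivAt (fun r => Real.log (1 - t ^ r) * (-(1 / r)))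
      (-(t ^ q * Real.log t) / (1 - t ^ q) * (-(1 / q))
        + Real.log (1 - t ^ q) * (q ^ 2)⁻¹) q := h2.mul h3
  have h5 := h4.exp
  have hEq : (fun r => (1 - t ^ r) ^ (-(1 / r)))
      =ᶠ[nhds q] fun r => Real.exp (Real.log (1 - t ^ r) * (-(1 / r))) := by
    have hmem : Set.Ioi (0:ℝ) ∈ nhds q := Ioi_mem_nhds hq
    filter_upwards [hmem] with r hr
    have : 0 < 1 - t ^ r := one_sub_w_pos hr ht
    rw [Real.rpow_def_of_pos this]
  have h6 := h5.congr_of_eventuallyEq hEq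
  have hval : Real.exp (Real.log (1 - t ^ q) * (-(1 / q))) *
      (-(t ^ q * Real.log t) / (1 - t ^ q) * (-(1 / q))
        + Real.log (1 - t ^ q) * (q ^ 2)⁻¹)
      = (1 - t ^ q) ^ (-(1 / q)) * etaF q t := by
    rw [← Real.rpow_def_of_pos hw]
    unfold etaF
    congr 1
    field_simp
    ring
  rwa [hval] at h6

/-- derivative of `q ↦ η(q,t)` -/
lemma hasDerivAt_eta {t : ℝ} (ht : t ∈ Set.Ioo (0:ℝ) 1) {p : ℝ} (hp : 0 < p) :
    HasDerivAt (fun q => etaF q t)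
      (-2 * etaF p t / p + t ^ p * Real.log t ^ 2 / (p * (1 - t ^ p) ^ 2)) p := by
  have hw : 0 < 1 - t ^ p := one_sub_w_pos hp ht
  have hwne : (1 : ℝ) - t ^ p ≠ 0 := ne_of_gt hw
  have h0 : HasDerivAt (fun q => t ^ q) (t ^ p * Real.log t) p :=
    (Real.hasStrictDerivAt_const_rpow ht.1 p).hasDerivAt
  have h1 : HasDerivAt (fun q => 1 - t ^ q) (-(t ^ p * Real.log t)) p := by
    exact h0.const_sub 1
  have h2 : HasDerivAt (fun q => Real.log (1 - t ^ q))
      (-(t ^ p * Real.log t) / (1 - t ^ p)) p := h1.log hwne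
  -- q ↦ 1/q^2
  have h3 : HasDerivAt (fun q : ℝ => 1 / q ^ 2)
      ((0 * p ^ 2 - 1 * (2 * p ^ 1)) / (p ^ 2) ^ 2) p := by
    exact (hasDerivAt_const p (1:ℝ)).div (by simpa using hasDerivAt_pow 2 p)
      (pow_ne_zero 2 hp.ne')
  have hterm1 := h3.mul h2
  -- second term : (t^q log t) / (q (1 - t^q))
  have h4 : HasDerivAt (fun q => t ^ q * Real.log t)
      (t ^ p * Real.log t * Real.log t) p := h0.mul_const _
  have h5 : HasDerivAt (fun q : ℝ => q * (1 - t ^ q))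
      (1 * (1 - t ^ p) + p * -(t ^ p * Real.log t)) p := (hasDerivAt_id p).mul h1
  have hden : p * (1 - t ^ p) ≠ 0 := by positivity
  have hterm2 := h4.div h5 hden
  have hsum := hterm1.add hterm2
  have : (fun q => etaF q t)
      = fun q => 1 / q ^ 2 * Real.log (1 - t ^ q) + t ^ q * Real.log t / (q * (1 - t ^ q)) := by
    funext q; simp [etaF]
  rw [this]
  convert hsum using 1
  · rfl
  · rfl
  · rfl
  unfold etaF
  field_simp
  ring

/-- second derivative of φ in p equals `EF` -/
lemma deriv_deriv_phi {t : ℝ} (ht : t ∈ Set.Ioo (0:ℝ) 1) {p : ℝ} (hp : 0 < p) :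
    deriv (fun q => deriv (fun r => (1 - t ^ r) ^ (-(1 / r))) q) p = EF p t := by
  have hEq : (fun q => deriv (fun r => (1 - t ^ r) ^ (-(1 / r))) q)
      =ᶠ[nhds p] fun q => (1 - t ^ q) ^ (-(1 / q)) * etaF q t := by
    filter_upwards [Ioi_mem_nhds hp] with q hq
    exact (hasDerivAt_phi ht hq).deriv
  rw [hEq.deriv_eq]
  have h1 : HasDerivAt (fun q => (1 - t ^ q) ^ (-(1 / q)) * etaF q t)
      ((1 - t ^ p) ^ (-(1 / p)) * etaF p t * etaF p t
        + (1 - t ^ p) ^ (-(1 / p)) *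
          (-2 * etaF p t / p + t ^ p * Real.log t ^ 2 / (p * (1 - t ^ p) ^ 2))) p :=
    (hasDerivAt_phi ht hp).mul (hasDerivAt_eta ht hp)
  rw [h1.deriv]
  unfold EF
  ring

set_option maxHeartbeats 1600000 in
/-- derivative of `A` in `t` equals `DF` -/
lemma hasDerivAt_A {p : ℝ} (hp : 0 < p) {t : ℝ} (ht : t ∈ Set.Ioo (0:ℝ) 1) :
    HasDerivAt (AF p) (DF p t) t := by
  have hw : 0 < 1 - t ^ p := one_sub_w_pos hp ht
  have hwne : (1 : ℝ) - t ^ p ≠ 0 := ne_of_gt hw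
  have ht0 : t ≠ 0 := ht.1.ne'
  have hpne : p ≠ 0 := hp.ne'
  -- rewrite A on a neighborhood
  have hEq : AF p =ᶠ[nhds t] fun s => s * etaF p s ^ 2 * (1 - s ^ p) ^ ((p - 1) / p) := by
    have hmem : Set.Ioo (0:ℝ) 1 ∈ nhds t := isOpen_Ioo.mem_nhds ht
    filter_upwards [hmem] with s hs
    have hws : 0 < 1 - s ^ p := one_sub_w_pos hp hs
    unfold AF
    rw [← Real.rpow_mul hws.le]
    rw [show -(1 / p) * (p - 1) = -((p - 1) / p) by field_simp]
    rw [Real.rpow_neg hws.le, div_eq_mul_inv, inv_inv]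
  -- build the derivative of the rewritten function
  have b0 : HasDerivAt (fun s : ℝ => s ^ p) (p * t ^ (p - 1)) t :=
    Real.hasDerivAt_rpow_const (Or.inl ht.1.ne')
  have b1 : HasDerivAt (fun s : ℝ => 1 - s ^ p) (-(p * t ^ (p - 1))) t := by
    exact b0.const_sub 1
  have bM : HasDerivAt (fun s : ℝ => (1 - s ^ p) ^ ((p - 1) / p))
      (-(p * t ^ (p - 1)) * ((p - 1) / p) * (1 - t ^ p) ^ ((p - 1) / p - 1)) t :=
    b1.rpow_const (Or.inl hwne)
  have blog : HasDerivAt (fun s : ℝ => Real.log (1 - s ^ p))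
      (-(p * t ^ (p - 1)) / (1 - t ^ p)) t := b1.log hwne
  have bterm1 := blog.const_mul ((1:ℝ) / p ^ 2)
  have bnum : HasDerivAt (fun s : ℝ => s ^ p * Real.log s)
      (p * t ^ (p - 1) * Real.log t + t ^ p * t⁻¹) t :=
    b0.mul (Real.hasDerivAt_log ht.1.ne')
  have bden : HasDerivAt (fun s : ℝ => p * (1 - s ^ p)) (p * -(p * t ^ (p - 1))) t :=
    b1.const_mul p
  have hden : p * (1 - t ^ p) ≠ 0 := by positivity
  have bterm2 := bnum.div bden hden
  have beta : HasDerivAt (fun s => etaF p s)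
      (1 / p ^ 2 * (-(p * t ^ (p - 1)) / (1 - t ^ p))
        + ((p * t ^ (p - 1) * Real.log t + t ^ p * t⁻¹) * (p * (1 - t ^ p))
            - t ^ p * Real.log t * (p * -(p * t ^ (p - 1)))) / (p * (1 - t ^ p)) ^ 2) t := by
    have : (fun s => etaF p s)
        = fun s => 1 / p ^ 2 * Real.log (1 - s ^ p)
            + s ^ p * Real.log s / (p * (1 - s ^ p)) := by
      funext s; simp [etaF]
    rw [this]
    exact bterm1.add bterm2
  have beta' : HasDerivAt (fun s => etaF p s)
      (t ^ p * Real.log t / (t * (1 - t ^ p) ^ 2)) t := by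
    convert beta using 1
    rw [Real.rpow_sub ht.1 p 1, Real.rpow_one]
    field_simp
    ring
  have bM' : HasDerivAt (fun s : ℝ => (1 - s ^ p) ^ ((p - 1) / p))
      (-((p - 1) * t ^ p * (1 - t ^ p) ^ ((p - 1) / p) / (t * (1 - t ^ p)))) t := by
    convert bM using 1
    rw [Real.rpow_sub ht.1 p 1, Real.rpow_sub hw ((p - 1) / p) 1, Real.rpow_one,
      Real.rpow_one]
    field_simp
  have hbig := ((hasDerivAt_id t).mul (beta'.pow 2)).mul bM'
  have hfinal := hbig.congr_of_eventuallyEq hEq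
  convert hfinal using 1
  · rfl
  · rfl
  unfold DF
  simp only [Pi.mul_apply, Pi.pow_apply, id_eq]
  field_simp
  ring

lemma etaF_neg {p t : ℝ} (hp : 0 < p) (ht : t ∈ Set.Ioo (0:ℝ) 1) : etaF p t < 0 := by
  have hw := w_pos hp ht
  have hw' := one_sub_w_pos hp ht
  have hL : Real.log (1 - t ^ p) < 0 := Real.log_neg hw' (by linarith)
  have hl : Real.log t < 0 := Real.log_neg ht.1 ht.2
  unfold etaF
  have h1 : (1 / p ^ 2) * Real.log (1 - t ^ p) < 0 :=
    mul_neg_of_pos_of_neg (by positivity) hL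
  have h2 : t ^ p * Real.log t / (p * (1 - t ^ p)) < 0 :=
    div_neg_of_neg_of_pos (mul_neg_of_pos_of_neg hw hl) (by positivity)
  linarith

lemma DF_lt_EF {p t : ℝ} (hp : 0 < p) (ht : t ∈ Set.Ioo (0:ℝ) 1) : DF p t < EF p t := by
  have hw := w_pos hp ht
  have hw' := one_sub_w_pos hp ht
  have hwne : (1 : ℝ) - t ^ p ≠ 0 := ne_of_gt hw'
  have hpne : p ≠ 0 := hp.ne'
  have hM : (1 - t ^ p) ^ ((p - 1) / p)
      = (1 - t ^ p) ^ (-(1 / p)) * (1 - t ^ p) := by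
    rw [show (p - 1) / p = -(1 / p) + 1 by field_simp; ring]
    rw [Real.rpow_add hw', Real.rpow_one]
  have key : EF p t - DF p t
      = (1 - t ^ p) ^ (-(1 / p)) *
          (t ^ p * (Real.log (1 - t ^ p) / p - Real.log t) ^ 2 - 2 * etaF p t) / p := by
    unfold EF DF
    rw [hM]
    unfold etaF
    field_simp
    ring
  have hPhi : 0 < (1 - t ^ p) ^ (-(1 / p)) := Real.rpow_pos_of_pos hw' _
  have heta := etaF_neg hp ht
  have hsq : 0 ≤ t ^ p * (Real.log (1 - t ^ p) / p - Real.log t) ^ 2 := by positivity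
  have hpos : 0 < EF p t - DF p t := by
    rw [key]
    apply div_pos _ hp
    apply mul_pos hPhi
    linarith
  linarith

section Continuity

variable {p x : ℝ}

lemma cont_w (hp : 0 < p) : ContinuousOn (fun t : ℝ => t ^ p) (Set.Icc 0 x) := fun t _ =>
  (Real.continuousAt_rpow_const t p (Or.inr hp.le)).continuousWithinAt

lemma one_sub_w_pos' (hp : 0 < p) (hx : x ∈ Set.Ioo (0:ℝ) 1) :
    ∀ t ∈ Set.Icc (0:ℝ) x, 0 < 1 - t ^ p := by
  intro t ht
  have h1 : t ^ p ≤ x ^ p := Real.rpow_le_rpow ht.1 ht.2 hp.le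
  have h2 : x ^ p < 1 := Real.rpow_lt_one hx.1.le hx.2 hp
  linarith

lemma cont_half_log (hp : 0 < p) :
    ContinuousOn (fun t : ℝ => t ^ (p / 2) * Real.log t) (Set.Icc 0 x) := by
  have hcomp : ContinuousOn
      (fun t : ℝ => (2 / p) * (t ^ (p / 2) * Real.log (t ^ (p / 2)))) (Set.Icc 0 x) :=
    continuousOn_const.mul (Real.continuous_mul_log.comp_continuousOn (cont_w (by positivity)))
  apply hcomp.congr
  intro t ht
  dsimp only
  rcases eq_or_lt_of_le ht.1 with h0 | h0
  · simp [← h0, Real.zero_rpow (show p / 2 ≠ 0 by positivity)]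
  · rw [Real.log_rpow h0]
    field_simp

lemma cont_w_log (hp : 0 < p) :
    ContinuousOn (fun t : ℝ => t ^ p * Real.log t) (Set.Icc 0 x) := by
  have hcomp : ContinuousOn
      (fun t : ℝ => t ^ (p / 2) * (t ^ (p / 2) * Real.log t)) (Set.Icc 0 x) :=
    (cont_w (by positivity)).mul (cont_half_log hp)
  apply hcomp.congr
  intro t ht
  dsimp only
  rcases eq_or_lt_of_le ht.1 with h0 | h0
  · simp [← h0, Real.zero_rpow (show p / 2 ≠ 0 by positivity),
      Real.zero_rpow hp.ne']
  · rw [← mul_assoc, ← Real.rpow_add h0]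
    norm_num

lemma cont_w_logsq (hp : 0 < p) :
    ContinuousOn (fun t : ℝ => t ^ p * Real.log t ^ 2) (Set.Icc 0 x) := by
  have hcomp : ContinuousOn
      (fun t : ℝ => (t ^ (p / 2) * Real.log t) ^ 2) (Set.Icc 0 x) :=
    (cont_half_log hp).pow 2
  apply hcomp.congr
  intro t ht
  dsimp only
  rcases eq_or_lt_of_le ht.1 with h0 | h0
  · simp [← h0, Real.zero_rpow (show p / 2 ≠ 0 by positivity),
      Real.zero_rpow hp.ne']
  · rw [mul_pow, ← Real.rpow_natCast (t ^ (p / 2)) 2, ← Real.rpow_mul h0.le]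
    norm_num

lemma cont_log_one_sub (hp : 0 < p) (hx : x ∈ Set.Ioo (0:ℝ) 1) :
    ContinuousOn (fun t : ℝ => Real.log (1 - t ^ p)) (Set.Icc 0 x) :=
  (continuousOn_const.sub (cont_w hp)).log
    (fun t ht => ne_of_gt (one_sub_w_pos' hp hx t ht))

lemma cont_etaF (hp : 0 < p) (hx : x ∈ Set.Ioo (0:ℝ) 1) :
    ContinuousOn (fun t => etaF p t) (Set.Icc 0 x) := by
  have h1 : ContinuousOn (fun t : ℝ =>
      (1 / p ^ 2) * Real.log (1 - t ^ p)
        + t ^ p * Real.log t / (p * (1 - t ^ p))) (Set.Icc 0 x) := by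
    refine (continuousOn_const.mul (cont_log_one_sub hp hx)).add
      ((cont_w_log hp).div (continuousOn_const.mul (continuousOn_const.sub (cont_w hp)))
        (fun t ht => ?_))
    have := one_sub_w_pos' hp hx t ht
    positivity
  exact h1.congr (fun t _ => by simp [etaF])

lemma cont_EF (hp : 0 < p) (hx : x ∈ Set.Ioo (0:ℝ) 1) :
    ContinuousOn (EF p) (Set.Icc 0 x) := by
  have hPhi : ContinuousOn (fun t : ℝ => (1 - t ^ p) ^ (-(1 / p))) (Set.Icc 0 x) :=
    (continuousOn_const.sub (cont_w hp)).rpow_const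
      (fun t ht => Or.inl (ne_of_gt (one_sub_w_pos' hp hx t ht)))
  have h2 : ContinuousOn (fun t : ℝ =>
      etaF p t ^ 2 - 2 * etaF p t / p
        + t ^ p * Real.log t ^ 2 / (p * (1 - t ^ p) ^ 2)) (Set.Icc 0 x) := by
    refine (((cont_etaF hp hx).pow 2).sub
      ((continuousOn_const.mul (cont_etaF hp hx)).div continuousOn_const
        (fun t _ => hp.ne'))).add
      ((cont_w_logsq hp).div
        ((continuousOn_const.mul ((continuousOn_const.sub (cont_w hp)).pow 2)))
        (fun t ht => ?_))
    have := one_sub_w_pos' hp hx t ht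
    positivity
  exact (hPhi.mul h2).congr (fun t _ => by simp [EF])

lemma cont_DF (hp : 0 < p) (hx : x ∈ Set.Ioo (0:ℝ) 1) :
    ContinuousOn (DF p) (Set.Icc 0 x) := by
  have hM : ContinuousOn (fun t : ℝ => (1 - t ^ p) ^ ((p - 1) / p)) (Set.Icc 0 x) :=
    (continuousOn_const.sub (cont_w hp)).rpow_const
      (fun t ht => Or.inl (ne_of_gt (one_sub_w_pos' hp hx t ht)))
  have h2 : ContinuousOn (fun t : ℝ =>
      etaF p t ^ 2 + 2 * etaF p t * (t ^ p * Real.log t) / (1 - t ^ p) ^ 2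
        + (1 - p) * t ^ p * etaF p t ^ 2 / (1 - t ^ p)) (Set.Icc 0 x) := by
    refine (((cont_etaF hp hx).pow 2).add
      (((continuousOn_const.mul (cont_etaF hp hx)).mul (cont_w_log hp)).div
        (((continuousOn_const.sub (cont_w hp)).pow 2))
        (fun t ht => ?_))).add
      (((continuousOn_const.mul (cont_w hp)).mul ((cont_etaF hp hx).pow 2)).div
        (continuousOn_const.sub (cont_w hp))
        (fun t ht => ne_of_gt (one_sub_w_pos' hp hx t ht)))
    have := one_sub_w_pos' hp hx t ht
    exact pow_ne_zero 2 this.ne'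
  exact (hM.mul h2).congr (fun t _ => by simp [DF, mul_assoc, mul_div_assoc])

lemma cont_AF (hp : 0 < p) (hx : x ∈ Set.Ioo (0:ℝ) 1) :
    ContinuousOn (AF p) (Set.Icc 0 x) := by
  have hPhi : ContinuousOn (fun t : ℝ => ((1 - t ^ p) ^ (-(1 / p))) ^ (p - 1))
      (Set.Icc 0 x) :=
    ((continuousOn_const.sub (cont_w hp)).rpow_const
      (fun t ht => Or.inl (ne_of_gt (one_sub_w_pos' hp hx t ht)))).rpow_const
      (fun t ht => Or.inl (ne_of_gt
        (Real.rpow_pos_of_pos (one_sub_w_pos' hp hx t ht) _)))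
  have h1 : ContinuousOn (fun t : ℝ => t * etaF p t ^ 2) (Set.Icc 0 x) :=
    continuousOn_id.mul ((cont_etaF hp hx).pow 2)
  have := h1.div hPhi (fun t ht => ne_of_gt (Real.rpow_pos_of_pos
    (Real.rpow_pos_of_pos (one_sub_w_pos' hp hx t ht) _) _))
  exact this.congr (fun t _ => by simp [AF])

end Continuity

theorem G_negative (p : ℝ) (hp : 0 < p) (x : ℝ) (hx : x ∈ Set.Ioo (0:ℝ) 1) :
    x * ((1 / p ^ 2) * Real.log (1 - x ^ p)
          + x ^ p * Real.log x / (p * (1 - x ^ p))) ^ 2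
        / ((1 - x ^ p) ^ (-(1 / p))) ^ (p - 1)
      - (∫ t in (0:ℝ)..x,
          deriv (fun q => deriv (fun r => (1 - t ^ r) ^ (-(1 / r))) q) p)
      < 0 := by
  have hxle : (0:ℝ) ≤ x := hx.1.le
  have huIcc : Set.uIcc (0:ℝ) x = Set.Icc 0 x := Set.uIcc_of_le hxle
  -- the integrand equals EF on [0, x]
  have h_congr : ∫ t in (0:ℝ)..x,
      deriv (fun q => deriv (fun r => (1 - t ^ r) ^ (-(1 / r))) q) p
      = ∫ t in (0:ℝ)..x, EF p t := by
    apply intervalIntegral.integral_congr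
    rw [huIcc]
    intro t ht
    rcases eq_or_lt_of_le ht.1 with h0 | h0
    · have hinner : (fun r : ℝ => (1 - (0:ℝ) ^ r) ^ (-(1 / r))) = fun _ => (1:ℝ) := by
        funext r
        rcases eq_or_ne r 0 with hr | hr
        · simp [hr]
        · simp [Real.zero_rpow hr]
      simp only [← h0, hinner, deriv_const]
      simp [EF, etaF, Real.zero_rpow hp.ne']
    · exact deriv_deriv_phi ⟨h0, lt_of_le_of_lt ht.2 hx.2⟩ hp
  -- integrabilities
  have hintEF : IntervalIntegrable (EF p) MeasureTheory.volume 0 x := by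
    apply ContinuousOn.intervalIntegrable
    rw [huIcc]; exact cont_EF hp hx
  have hintDF : IntervalIntegrable (DF p) MeasureTheory.volume 0 x := by
    apply ContinuousOn.intervalIntegrable
    rw [huIcc]; exact cont_DF hp hx
  -- FTC for AF
  have hFTC : ∫ t in (0:ℝ)..x, DF p t = AF p x - AF p 0 :=
    intervalIntegral.integral_eq_sub_of_hasDerivAt_of_le hxle (cont_AF hp hx)
      (fun t ht => hasDerivAt_A hp ⟨ht.1, lt_trans ht.2 hx.2⟩) hintDF
  have hA0 : AF p 0 = 0 := by simp [AF]
  -- strict positivity of the gap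
  have hgap : 0 < ∫ t in (0:ℝ)..x, (EF p t - DF p t) := by
    apply intervalIntegral.intervalIntegral_pos_of_pos_on (hintEF.sub hintDF)
      _ hx.1
    intro t ht
    have := DF_lt_EF hp ⟨ht.1, lt_trans ht.2 hx.2⟩
    linarith
  rw [intervalIntegral.integral_sub hintEF hintDF] at hgap
  show AF p x - (∫ t in (0:ℝ)..x,
      deriv (fun q => deriv (fun r => (1 - t ^ r) ^ (-(1 / r))) q) p) < 0
  rw [h_congr]
  rw [hFTC, hA0] at hgap
  linarith
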